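/- Let G be a group satisfying the 5-Engel identity [x,y,y,y,y,y] = 1 for all x, y ∈ G. Then for all x, y, z_1, z_2, z_3, z_4, z_5 ∈ G and any fixed enumeration of the symmetric group Sym(5), the product over all σ ∈ Sym(5) of the left-normed commutators [x, z_{σ(1)}, y, z_{σ(2)}, z_{σ(3)}, z_{σ(4)}, z_{σ(5)}] (taken in the order of that enumeration) lies in γ_8(G). -/

import Mathlib

/-- The commutator `[a,b] = a⁻¹ b⁻¹ a b`. -/
def gc {G : Type*} [Group G] (a b : G) : G := a⁻¹ * b⁻¹ * a * b

open scoped commutatorElement IsMulCommutative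

section Basic
variable {H : Type*} [Group H]

lemma gc_mul_right (a b c : H) : gc a (b * c) = gc a c * gc a b * gc (gc a b) c := by
  simp only [gc]; group

lemma gc_mul_left (a b c : H) : gc (a * b) c = gc a c * gc (gc a c) b * gc b c := by
  simp only [gc]; group

lemma gc_one_right (a : H) : gc a 1 = 1 := by simp [gc]

lemma gc_one_left (a : H) : gc 1 a = 1 := by simp [gc]

lemma mul_comm_of_gc_eq_one {a b : H} (h : gc a b = 1) : a * b = b * a := by
  have : a * b = (b * a) * gc a b := by simp only [gc]; group
  rw [this, h, mul_one]

lemma map_gc {K : Type*} [Group K] (f : H →* K) (a b : H) :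
    f (gc a b) = gc (f a) (f b) := by simp [gc]

lemma lcs_succ_eq (n : ℕ) :
    (⊤ : Subgroup H).lowerCentralSeries (n + 1) = ⁅(⊤ : Subgroup H).lowerCentralSeries n, (⊤ : Subgroup H)⁆ := rfl

lemma map_lcs {K : Type*} [Group K] (f : H →* K) (hf : Function.Surjective f) :
    ∀ n, ((⊤ : Subgroup H).lowerCentralSeries n).map f = (⊤ : Subgroup K).lowerCentralSeries n := by
  intro n
  induction n with
  | zero =>
      simpa using Subgroup.map_top_of_surjective f hf
  | succ n ih =>
      rw [lcs_succ_eq, lcs_succ_eq, Subgroup.map_commutator, ih,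
        Subgroup.map_top_of_surjective f hf]

end Basic

theorem lcs_comm_le :
    ∀ (j : ℕ) {H : Type*} [Group H] (i : ℕ),
      ⁅(⊤ : Subgroup H).lowerCentralSeries i, (⊤ : Subgroup H).lowerCentralSeries j⁆ ≤ (⊤ : Subgroup H).lowerCentralSeries (i + j + 1) := by
  intro j
  induction j with
  | zero =>
      intro H _ i
      rw [lowerCentralSeries_zero]
      exact le_of_eq (lcs_succ_eq i).symm
  | succ j ih =>
      intro H _ i
      set N := (⊤ : Subgroup H).lowerCentralSeries (i + (j + 1) + 1) with hN
      have hNormal : N.Normal := by infer_instance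
      have hker : (QuotientGroup.mk' N).ker = N := QuotientGroup.ker_mk' N
      have hsurj := QuotientGroup.mk'_surjective N
      rw [← hker, ← Subgroup.map_eq_bot_iff, Subgroup.map_commutator,
        map_lcs _ hsurj, map_lcs _ hsurj]
      have hbot : (⊤ : Subgroup (H ⧸ N)).lowerCentralSeries (i + j + 2) = ⊥ := by
        rw [← map_lcs (QuotientGroup.mk' N) hsurj]
        rw [Subgroup.map_eq_bot_iff, hker]
        have : i + (j+1) + 1 = i + j + 2 := by omega
        rw [← this]
      rw [lcs_succ_eq, Subgroup.commutator_comm]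
      apply Subgroup.commutator_commutator_eq_bot_of_rotate
      · -- ⁅⁅⊤, γ i⁆, γ j⁆ = ⊥
        rw [Subgroup.commutator_comm (⊤ : Subgroup (H ⧸ N)), ← lcs_succ_eq]
        refine eq_bot_iff.mpr (le_trans (ih (i+1)) ?_)
        have : i + 1 + j + 1 = i + j + 2 := by omega
        rw [this, hbot]
      · -- ⁅⁅γ i, γ j⁆, ⊤⁆ = ⊥
        refine eq_bot_iff.mpr (le_trans (Subgroup.commutator_mono (ih i) le_top) ?_)
        rw [← lcs_succ_eq]
        have : i + j + 1 + 1 = i + j + 2 := by omega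
        rw [this, hbot]

section Gamma
variable {H : Type*} [Group H]

lemma mem_g0 (a : H) : a ∈ (⊤ : Subgroup H).lowerCentralSeries 0 := by
  rw [lowerCentralSeries_zero]; trivial

lemma mem_down {g : H} {m n : ℕ} (h : g ∈ (⊤ : Subgroup H).lowerCentralSeries n) (hmn : m ≤ n) :
    g ∈ (⊤ : Subgroup H).lowerCentralSeries m :=
  lowerCentralSeries_antitone ⊤ hmn h

lemma mem_gc {a b : H} {i j : ℕ} (ha : a ∈ (⊤ : Subgroup H).lowerCentralSeries i)
    (hb : b ∈ (⊤ : Subgroup H).lowerCentralSeries j) : gc a b ∈ (⊤ : Subgroup H).lowerCentralSeries (i + j + 1) := by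
  have : gc a b = ⁅a⁻¹, b⁻¹⁆ := by
    rw [commutatorElement_def, inv_inv, inv_inv]; rfl
  rw [this]
  exact lcs_comm_le j i (Subgroup.commutator_mem_commutator (inv_mem ha) (inv_mem hb))

lemma mem_gcTop {a : H} {i : ℕ} (ha : a ∈ (⊤ : Subgroup H).lowerCentralSeries i) (b : H) :
    gc a b ∈ (⊤ : Subgroup H).lowerCentralSeries (i + 1) :=
  mem_down (mem_gc ha (mem_g0 b)) (by omega)

end Gamma
section Seven
variable {H : Type*} [Group H]

/-- iterated commutator: `cl g [a,b,c] = [[g,a],b],c]` -/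
def cl (g : H) (L : List H) : H := L.foldl gc g

@[simp] lemma cl_nil (g : H) : cl g [] = g := rfl

@[simp] lemma cl_cons (g c : H) (L : List H) : cl g (c :: L) = cl (gc g c) L := rfl

lemma cl_one : ∀ (L : List H), cl (1 : H) L = 1
  | [] => rfl
  | c :: L => by rw [cl_cons, gc_one_left]; exact cl_one L

lemma cl_mem {g : H} {m : ℕ} (hg : g ∈ (⊤ : Subgroup H).lowerCentralSeries m) :
    ∀ (L : List H), cl g L ∈ (⊤ : Subgroup H).lowerCentralSeries (m + L.length) := by
  intro L
  induction L generalizing g m with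
  | nil => simpa using hg
  | cons c L ih =>
      rw [cl_cons]
      refine mem_down (ih (mem_gcTop hg c)) (by simp; omega)

variable (h7 : (⊤ : Subgroup H).lowerCentralSeries 7 = ⊥)
include h7

lemma cl_eq_one {g : H} {m : ℕ} (hg : g ∈ (⊤ : Subgroup H).lowerCentralSeries m) (L : List H)
    (h : 7 ≤ m + L.length) : cl g L = 1 := by
  have := mem_down (cl_mem hg L) h
  rw [h7] at this
  simpa using this

lemma gc_eq_one {a b : H} {i j : ℕ} (ha : a ∈ (⊤ : Subgroup H).lowerCentralSeries i)
    (hb : b ∈ (⊤ : Subgroup H).lowerCentralSeries j) (hij : 6 ≤ i + j) : gc a b = 1 := by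
  have := mem_down (mem_gc ha hb) (show 7 ≤ i + j + 1 by omega)
  rw [h7] at this
  simpa using this

lemma commute_high {a b : H} {i j : ℕ} (ha : a ∈ (⊤ : Subgroup H).lowerCentralSeries i)
    (hb : b ∈ (⊤ : Subgroup H).lowerCentralSeries j) (hij : 6 ≤ i + j) : a * b = b * a :=
  mul_comm_of_gc_eq_one (gc_eq_one h7 ha hb hij)

lemma cl_mul : ∀ (L : List H) {i j : ℕ} {a b : H},
    a ∈ (⊤ : Subgroup H).lowerCentralSeries i → b ∈ (⊤ : Subgroup H).lowerCentralSeries j →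
    6 ≤ i + j + L.length → cl (a * b) L = cl a L * cl b L := by
  intro L
  induction L with
  | nil => intro i j a b _ _ _; rfl
  | cons c L ih =>
      intro i j a b ha hb hlen
      have hlen' : L.length + 1 = (c :: L).length := rfl
      have hac : gc a c ∈ (⊤ : Subgroup H).lowerCentralSeries (i + 1) := mem_gcTop ha c
      have hbc : gc b c ∈ (⊤ : Subgroup H).lowerCentralSeries (j + 1) := mem_gcTop hb c
      have herr : gc (gc a c) b ∈ (⊤ : Subgroup H).lowerCentralSeries (i + 1 + j + 1) := mem_gc hac hb
      rw [cl_cons, cl_cons, cl_cons, gc_mul_left, mul_assoc]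
      rw [ih hac (mul_mem (mem_down herr (by omega)) hbc)
        (by omega)]
      rw [ih (mem_down herr (le_refl _)) hbc (by omega)]
      rw [cl_eq_one h7 herr L (by omega), one_mul]

/-- the central weight-7 commutator map -/
def M (x y w0 w1 w2 w3 w4 : H) : H :=
  gc (gc (gc (gc (gc (gc x w0) y) w1) w2) w3) w4

lemma Mslot (A : H) {m : ℕ} (hA : A ∈ (⊤ : Subgroup H).lowerCentralSeries m) (L : List H)
    (hlen : m + L.length = 5) (a b : H) :
    cl (gc A (a * b)) L = cl (gc A a) L * cl (gc A b) L := by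
  have ha : gc A a ∈ (⊤ : Subgroup H).lowerCentralSeries (m + 1) := mem_gcTop hA a
  have hb : gc A b ∈ (⊤ : Subgroup H).lowerCentralSeries (m + 1) := mem_gcTop hA b
  have herr : gc (gc A a) b ∈ (⊤ : Subgroup H).lowerCentralSeries (m + 2) := mem_gcTop ha b
  rw [gc_mul_right, mul_assoc]
  rw [cl_mul h7 L hb (mul_mem ha (mem_down herr (by omega))) (by omega)]
  rw [cl_mul h7 L ha herr (by omega)]
  rw [cl_eq_one h7 herr L (by omega), mul_one]
  exact commute_high h7 (cl_mem hb L) (cl_mem ha L) (by omega)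

end Seven
section MLemmas
variable {H : Type*} [Group H]
variable (h7 : (⊤ : Subgroup H).lowerCentralSeries 7 = ⊥)
include h7

lemma M_mul0 (x y a b c1 c2 c3 c4 : H) :
    M x y (a * b) c1 c2 c3 c4 = M x y a c1 c2 c3 c4 * M x y b c1 c2 c3 c4 :=
  Mslot h7 x (mem_g0 x) [y, c1, c2, c3, c4] (by norm_num) a b

lemma M_mul1 (x y c0 a b c2 c3 c4 : H) :
    M x y c0 (a * b) c2 c3 c4 = M x y c0 a c2 c3 c4 * M x y c0 b c2 c3 c4 :=
  Mslot h7 (gc (gc x c0) y) (mem_gcTop (mem_gcTop (mem_g0 x) c0) y)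
    [c2, c3, c4] (by norm_num) a b

lemma M_mul2 (x y c0 c1 a b c3 c4 : H) :
    M x y c0 c1 (a * b) c3 c4 = M x y c0 c1 a c3 c4 * M x y c0 c1 b c3 c4 :=
  Mslot h7 (gc (gc (gc x c0) y) c1)
    (mem_gcTop (mem_gcTop (mem_gcTop (mem_g0 x) c0) y) c1) [c3, c4] (by norm_num) a b

lemma M_mul3 (x y c0 c1 c2 a b c4 : H) :
    M x y c0 c1 c2 (a * b) c4 = M x y c0 c1 c2 a c4 * M x y c0 c1 c2 b c4 :=
  Mslot h7 (gc (gc (gc (gc x c0) y) c1) c2)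
    (mem_gcTop (mem_gcTop (mem_gcTop (mem_gcTop (mem_g0 x) c0) y) c1) c2)
    [c4] (by norm_num) a b

lemma M_mul4 (x y c0 c1 c2 c3 a b : H) :
    M x y c0 c1 c2 c3 (a * b) = M x y c0 c1 c2 c3 a * M x y c0 c1 c2 c3 b :=
  Mslot h7 (gc (gc (gc (gc (gc x c0) y) c1) c2) c3)
    (mem_gcTop (mem_gcTop (mem_gcTop (mem_gcTop (mem_gcTop (mem_g0 x) c0) y) c1) c2) c3)
    [] (by norm_num) a b

lemma M_mem6 (x y w0 w1 w2 w3 w4 : H) :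
    M x y w0 w1 w2 w3 w4 ∈ (⊤ : Subgroup H).lowerCentralSeries 6 :=
  mem_down (cl_mem (mem_gcTop (mem_g0 x) w0) [y, w1, w2, w3, w4]) (by norm_num)

lemma M_mem_center (x y w0 w1 w2 w3 w4 : H) :
    M x y w0 w1 w2 w3 w4 ∈ Subgroup.center H := by
  rw [Subgroup.mem_center_iff]
  intro g
  exact commute_high h7 (mem_g0 g) (M_mem6 h7 x y w0 w1 w2 w3 w4) (by omega)

variable (hE : ∀ a b : H, gc (gc (gc (gc (gc a b) b) b) b) b = 1)
include hE

lemma M_diag (x y v : H) : M x y v v v v v = 1 := by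
  have h1 : cl (gc (x * y) v) [v, v, v, v] = 1 := hE (x * y) v
  have hxv : gc x v ∈ (⊤ : Subgroup H).lowerCentralSeries (0 + 1) := mem_gcTop (mem_g0 x) v
  have hK : gc (gc x v) y ∈ (⊤ : Subgroup H).lowerCentralSeries (0 + 1 + 1) := mem_gcTop hxv y
  have hyv : gc y v ∈ (⊤ : Subgroup H).lowerCentralSeries (0 + 1) := mem_gcTop (mem_g0 y) v
  rw [gc_mul_left, mul_assoc] at h1
  rw [cl_mul h7 [v, v, v, v] hxv (mul_mem (mem_down hK (by omega)) hyv) (by norm_num)] at h1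
  rw [cl_mul h7 [v, v, v, v] hK hyv (by norm_num)] at h1
  have e1 : cl (gc x v) [v, v, v, v] = 1 := hE x v
  have e2 : cl (gc y v) [v, v, v, v] = 1 := hE y v
  rw [e1, e2, one_mul, mul_one] at h1
  exact h1

end MLemmas

section Polarize

open Finset

lemma fin5_cases : ∀ k : Fin 5, k = 0 ∨ k = 1 ∨ k = 2 ∨ k = 3 ∨ k = 4 := by decide

lemma zpow_finset_sum {C : Type*} [CommGroup C] {α : Type*} (x : C) (s : Finset α) (g : α → ℤ) :
    x ^ (∑ a ∈ s, g a) = ∏ a ∈ s, x ^ g a := by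
  classical
  induction s using Finset.induction with
  | empty => simp
  | insert a s h ih => rw [Finset.sum_insert h, Finset.prod_insert h, zpow_add, ih]

lemma count_lemma (R : Finset (Fin 5)) :
    (∑ S ∈ (univ : Finset (Fin 5)).powerset, if R ⊆ S then (-1 : ℤ) ^ S.card else 0)
      = if R = univ then -1 else 0 := by
  classical
  rw [← Finset.sum_filter]
  rw [Finset.sum_nbij' (i := fun S => S \ R) (j := fun T => R ∪ T)
    (t := (univ \ R).powerset) (g := fun T => (-1 : ℤ) ^ (R.card + T.card))]
  · simp only [pow_add]
    rw [← Finset.mul_sum]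
    rw [Finset.sum_powerset_neg_one_pow_card]
    by_cases hR : R = univ
    · rw [if_pos hR, if_pos (by rw [hR, Finset.sdiff_self]), hR]
      norm_num [Finset.card_univ]
    · rw [if_neg hR, if_neg, mul_zero]
      intro h
      rw [Finset.sdiff_eq_empty_iff_subset, Finset.univ_subset_iff] at h
      exact hR h
  · intro S hS
    simp only [Finset.mem_filter, Finset.mem_powerset] at hS
    simp only [Finset.mem_powerset]
    exact Finset.sdiff_subset_sdiff hS.1 le_rfl
  · intro T hT
    simp only [Finset.mem_powerset] at hT
    simp only [Finset.mem_filter, Finset.mem_powerset]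
    exact ⟨Finset.subset_univ _, Finset.subset_union_left⟩
  · intro S hS
    simp only [Finset.mem_filter, Finset.mem_powerset] at hS
    exact Finset.union_sdiff_of_subset hS.2
  · intro T hT
    simp only [Finset.mem_powerset] at hT
    apply Finset.union_sdiff_cancel_left
    exact Finset.disjoint_left.mpr fun a ha hA => ((Finset.mem_sdiff.mp (hT hA)).2 ha).elim
  · intro S hS
    simp only [Finset.mem_filter, Finset.mem_powerset] at hS
    rw [Finset.card_sdiff_of_subset hS.2, Nat.add_sub_cancel' (Finset.card_le_card hS.2)]

end Polarize

section Polarize2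
open Finset

abbrev I5 := Fin 5 × Fin 5 × Fin 5 × Fin 5 × Fin 5

theorem polarize {C : Type*} [CommGroup C]
    (q : Fin 5 → Fin 5 → Fin 5 → Fin 5 → Fin 5 → C)
    (hq : ∀ S : Finset (Fin 5),
      (∏ i0 ∈ S, ∏ i1 ∈ S, ∏ i2 ∈ S, ∏ i3 ∈ S, ∏ i4 ∈ S, q i0 i1 i2 i3 i4) = 1) :
    ∏ σ : Equiv.Perm (Fin 5), q (σ 0) (σ 1) (σ 2) (σ 3) (σ 4) = 1 := by
  classical
  set Q : I5 → C := fun p => q p.1 p.2.1 p.2.2.1 p.2.2.2.1 p.2.2.2.2 with hQ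
  set R : I5 → Finset (Fin 5) :=
    fun p => {p.1, p.2.1, p.2.2.1, p.2.2.2.1, p.2.2.2.2} with hRdef
  have hflat : ∀ S : Finset (Fin 5), (∏ p ∈ S ×ˢ S ×ˢ S ×ˢ S ×ˢ S, Q p) = 1 := by
    intro S
    simp only [hQ, Finset.prod_product]
    exact hq S
  have setp : ∀ (p : I5) (S : Finset (Fin 5)),
      p ∈ S ×ˢ S ×ˢ S ×ˢ S ×ˢ S ↔ R p ⊆ S := by
    intro p S
    simp [hRdef, Finset.mem_product, Finset.insert_subset_iff, and_assoc]
  have main : ∏ p ∈ (univ : Finset I5), Q p ^ (if R p = univ then (-1 : ℤ) else 0) = 1 := by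
    have step1 : ∀ p : I5, Q p ^ (if R p = univ then (-1 : ℤ) else 0)
        = ∏ S ∈ (univ : Finset (Fin 5)).powerset,
            Q p ^ (if R p ⊆ S then (-1 : ℤ) ^ S.card else 0) := by
      intro p
      rw [← zpow_finset_sum, count_lemma]
    rw [Finset.prod_congr rfl fun p _ => step1 p, Finset.prod_comm]
    refine Finset.prod_eq_one fun S _ => ?_
    have step2 : ∀ p : I5, Q p ^ (if R p ⊆ S then (-1 : ℤ) ^ S.card else 0)
        = if p ∈ S ×ˢ S ×ˢ S ×ˢ S ×ˢ S then Q p ^ ((-1 : ℤ) ^ S.card) else 1 := by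
      intro p
      by_cases h : R p ⊆ S
      · rw [if_pos h, if_pos ((setp p S).mpr h)]
      · rw [if_neg h, if_neg (fun hc => h ((setp p S).mp hc)), zpow_zero]
    rw [Finset.prod_congr rfl fun p _ => step2 p]
    rw [Finset.prod_ite_mem, Finset.univ_inter, Finset.prod_zpow, hflat S, one_zpow]
  -- convert main into a product over the filtered set
  have main2 : (∏ p ∈ Finset.univ.filter (fun p : I5 => R p = univ), Q p)⁻¹ = 1 := by
    rw [← Finset.prod_inv_distrib, Finset.prod_filter]
    have heq : (∏ p ∈ Finset.univ, if R p = univ then (Q p)⁻¹ else 1)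
        = ∏ p ∈ (Finset.univ : Finset I5), Q p ^ (if R p = univ then (-1 : ℤ) else 0) := by
      refine Finset.prod_congr rfl fun p _ => ?_
      by_cases h : R p = univ
      · rw [if_pos h, if_pos h, zpow_neg_one]
      · rw [if_neg h, if_neg h, zpow_zero]
    rw [heq]
    exact main
  have main3 : ∏ p ∈ Finset.univ.filter (fun p : I5 => R p = univ), Q p = 1 := by
    rwa [inv_eq_one] at main2
  rw [← main3]
  refine Finset.prod_bij (fun (σ : Equiv.Perm (Fin 5)) _ => ((σ 0, σ 1, σ 2, σ 3, σ 4) : I5))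
    ?_ ?_ ?_ ?_
  · intro σ _
    rw [Finset.mem_filter]
    refine ⟨Finset.mem_univ _, ?_⟩
    rw [Finset.eq_univ_iff_forall]
    intro j
    have hj : j = σ (σ.symm j) := (Equiv.apply_symm_apply σ j).symm
    rcases fin5_cases (σ.symm j) with hk | hk | hk | hk | hk <;>
      rw [hk] at hj <;> simp [hRdef, hj]
  · intro σ _ τ _ h
    simp only [Prod.mk.injEq] at h
    obtain ⟨h0, h1, h2, h3, h4⟩ := h
    ext i
    rcases fin5_cases i with rfl | rfl | rfl | rfl | rfl <;> simp [h0, h1, h2, h3, h4]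
  · intro p hp
    rw [Finset.mem_filter] at hp
    set f : Fin 5 → Fin 5 := fun k =>
      if k = 0 then p.1 else if k = 1 then p.2.1 else if k = 2 then p.2.2.1
        else if k = 3 then p.2.2.2.1 else p.2.2.2.2 with hf
    have hsurj : Function.Surjective f := by
      intro j
      have hj : j ∈ R p := hp.2 ▸ Finset.mem_univ j
      simp only [hRdef, Finset.mem_insert, Finset.mem_singleton] at hj
      rcases hj with h | h | h | h | h
      · exact ⟨0, by simp [hf, h]⟩
      · exact ⟨1, by simp [hf, h]⟩
      · exact ⟨2, by simp [hf, h]⟩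
      · exact ⟨3, by simp [hf, h]⟩
      · exact ⟨4, by simp [hf, h]⟩
    have hinj : Function.Injective f := Finite.injective_iff_surjective.mpr hsurj
    refine ⟨Equiv.ofBijective f ⟨hinj, hsurj⟩, Finset.mem_univ _, ?_⟩
    have hfp : (f 0, f 1, f 2, f 3, f 4) = p := by simp [hf]
    exact hfp
  · intro σ _
    rfl

end Polarize2
section KeyH
variable {H : Type*} [Group H]
variable (h7 : (⊤ : Subgroup H).lowerCentralSeries 7 = ⊥)

/-- the weight-7 commutator, packaged as an element of the center. -/
def mkC (x y a b c d e : H) : Subgroup.center H :=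
  ⟨M x y a b c d e, M_mem_center h7 x y a b c d e⟩

variable (x y : H)

def Phi0 (v1 v2 v3 v4 : H) : H →* Subgroup.center H where
  toFun v := mkC h7 x y v v1 v2 v3 v4
  map_one' := Subtype.ext (by simp [mkC, M, gc_one_right, gc_one_left])
  map_mul' a b := Subtype.ext (by
    simpa [mkC] using M_mul0 h7 x y a b v1 v2 v3 v4)

def Phi1 (v0 v2 v3 v4 : H) : H →* Subgroup.center H where
  toFun v := mkC h7 x y v0 v v2 v3 v4
  map_one' := Subtype.ext (by simp [mkC, M, gc_one_right, gc_one_left])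
  map_mul' a b := Subtype.ext (by
    simpa [mkC] using M_mul1 h7 x y v0 a b v2 v3 v4)

def Phi2 (v0 v1 v3 v4 : H) : H →* Subgroup.center H where
  toFun v := mkC h7 x y v0 v1 v v3 v4
  map_one' := Subtype.ext (by simp [mkC, M, gc_one_right, gc_one_left])
  map_mul' a b := Subtype.ext (by
    simpa [mkC] using M_mul2 h7 x y v0 v1 a b v3 v4)

def Phi3 (v0 v1 v2 v4 : H) : H →* Subgroup.center H where
  toFun v := mkC h7 x y v0 v1 v2 v v4
  map_one' := Subtype.ext (by simp [mkC, M, gc_one_right, gc_one_left])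
  map_mul' a b := Subtype.ext (by
    simpa [mkC] using M_mul3 h7 x y v0 v1 v2 a b v4)

def Phi4 (v0 v1 v2 v3 : H) : H →* Subgroup.center H where
  toFun v := mkC h7 x y v0 v1 v2 v3 v
  map_one' := Subtype.ext (by simp [mkC, M, gc_one_right, gc_one_left])
  map_mul' a b := Subtype.ext (by
    simpa [mkC] using M_mul4 h7 x y v0 v1 v2 v3 a b)

variable (z : Fin 5 → H)

lemma hom_prod (ψ : H →* Subgroup.center H) (S : Finset (Fin 5)) :
    ψ ((S.toList.map z).prod) = ∏ i ∈ S, ψ (z i) := by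
  rw [map_list_prod, List.map_map, ← List.prod_toFinset _ S.nodup_toList,
    Finset.toList_toFinset]
  rfl

variable (hE : ∀ a b : H, gc (gc (gc (gc (gc a b) b) b) b) b = 1)
include h7 hE

lemma D_one (S : Finset (Fin 5)) :
    (∏ i0 ∈ S, ∏ i1 ∈ S, ∏ i2 ∈ S, ∏ i3 ∈ S, ∏ i4 ∈ S,
      mkC h7 x y (z i0) (z i1) (z i2) (z i3) (z i4)) = 1 := by
  set w : H := (S.toList.map z).prod with hw
  have h0 : mkC h7 x y w w w w w = 1 := Subtype.ext (M_diag h7 hE x y w)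
  have e0 : mkC h7 x y w w w w w = ∏ i0 ∈ S, mkC h7 x y (z i0) w w w w :=
    hom_prod z (Phi0 h7 x y w w w w) S
  have e1 : ∀ i0, mkC h7 x y (z i0) w w w w
      = ∏ i1 ∈ S, mkC h7 x y (z i0) (z i1) w w w :=
    fun i0 => hom_prod z (Phi1 h7 x y (z i0) w w w) S
  have e2 : ∀ i0 i1, mkC h7 x y (z i0) (z i1) w w w
      = ∏ i2 ∈ S, mkC h7 x y (z i0) (z i1) (z i2) w w :=
    fun i0 i1 => hom_prod z (Phi2 h7 x y (z i0) (z i1) w w) S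
  have e3 : ∀ i0 i1 i2, mkC h7 x y (z i0) (z i1) (z i2) w w
      = ∏ i3 ∈ S, mkC h7 x y (z i0) (z i1) (z i2) (z i3) w :=
    fun i0 i1 i2 => hom_prod z (Phi3 h7 x y (z i0) (z i1) (z i2) w) S
  have e4 : ∀ i0 i1 i2 i3, mkC h7 x y (z i0) (z i1) (z i2) (z i3) w
      = ∏ i4 ∈ S, mkC h7 x y (z i0) (z i1) (z i2) (z i3) (z i4) :=
    fun i0 i1 i2 i3 => hom_prod z (Phi4 h7 x y (z i0) (z i1) (z i2) (z i3)) S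
  have key : (∏ i0 ∈ S, ∏ i1 ∈ S, ∏ i2 ∈ S, ∏ i3 ∈ S, ∏ i4 ∈ S,
      mkC h7 x y (z i0) (z i1) (z i2) (z i3) (z i4)) = mkC h7 x y w w w w w := by
    rw [e0]
    refine Finset.prod_congr rfl fun i0 _ => ?_
    rw [e1 i0]
    refine Finset.prod_congr rfl fun i1 _ => ?_
    rw [e2 i0 i1]
    refine Finset.prod_congr rfl fun i2 _ => ?_
    rw [e3 i0 i1 i2]
    refine Finset.prod_congr rfl fun i3 _ => ?_
    rw [e4 i0 i1 i2 i3]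
  rw [key, h0]

lemma key_list (l : List (Equiv.Perm (Fin 5))) (hnd : l.Nodup) (hall : ∀ σ, σ ∈ l) :
    (l.map fun σ : Equiv.Perm (Fin 5) =>
      M x y (z (σ 0)) (z (σ 1)) (z (σ 2)) (z (σ 3)) (z (σ 4))).prod = 1 := by
  have hperm : ∏ σ : Equiv.Perm (Fin 5),
      mkC h7 x y (z (σ 0)) (z (σ 1)) (z (σ 2)) (z (σ 3)) (z (σ 4)) = 1 :=
    polarize (fun i0 i1 i2 i3 i4 => mkC h7 x y (z i0) (z i1) (z i2) (z i3) (z i4))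
      (fun S => D_one h7 x y z hE S)
  have huniv : l.toFinset = Finset.univ :=
    Finset.eq_univ_iff_forall.mpr fun σ => List.mem_toFinset.mpr (hall σ)
  have h1 : (l.map fun σ : Equiv.Perm (Fin 5) =>
      mkC h7 x y (z (σ 0)) (z (σ 1)) (z (σ 2)) (z (σ 3)) (z (σ 4))).prod = 1 := by
    rw [← List.prod_toFinset _ hnd, huniv]
    exact hperm
  have h2 : (l.map fun σ : Equiv.Perm (Fin 5) =>
      M x y (z (σ 0)) (z (σ 1)) (z (σ 2)) (z (σ 3)) (z (σ 4))).prod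
      = ((l.map fun σ : Equiv.Perm (Fin 5) =>
          mkC h7 x y (z (σ 0)) (z (σ 1)) (z (σ 2)) (z (σ 3)) (z (σ 4))).prod : H) := by
    rw [SubmonoidClass.coe_list_prod, List.map_map]
    rfl
  rw [h2, h1]
  rfl

end KeyH

/-- In a 5-Engel group `G`, for any enumeration (a list containing every permutation
exactly once) of `Sym(5)`, the product of the left-normed commutators
`[x, z_{σ(1)}, y, z_{σ(2)}, z_{σ(3)}, z_{σ(4)}, z_{σ(5)}]` over that enumeration
lies in `γ₈(G)`. -/
theorem fiveEngel_linearized_product_mem_gamma8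
    (G : Type*) [Group G]
    (h5 : ∀ x y : G, gc (gc (gc (gc (gc x y) y) y) y) y = 1)
    (x y : G) (z : Fin 5 → G)
    (l : List (Equiv.Perm (Fin 5))) (hnd : l.Nodup) (hall : ∀ σ, σ ∈ l) :
    (l.map fun σ =>
      gc (gc (gc (gc (gc (gc x (z (σ 0))) y) (z (σ 1))) (z (σ 2))) (z (σ 3))) (z (σ 4))).prod
      ∈ (⊤ : Subgroup G).lowerCentralSeries 7 := by
  set N := (⊤ : Subgroup G).lowerCentralSeries 7 with hN
  have hsurj := QuotientGroup.mk'_surjective N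
  rw [← QuotientGroup.eq_one_iff]
  set φ := QuotientGroup.mk' N with hφ
  have hq7 : (⊤ : Subgroup (G ⧸ N)).lowerCentralSeries 7 = ⊥ := by
    rw [← map_lcs φ hsurj, Subgroup.map_eq_bot_iff, QuotientGroup.ker_mk']
  have hqE : ∀ a b : G ⧸ N, gc (gc (gc (gc (gc a b) b) b) b) b = 1 := by
    intro a b
    obtain ⟨a, rfl⟩ := hsurj a
    obtain ⟨b, rfl⟩ := hsurj b
    simpa only [map_gc, map_one] using congrArg φ (h5 a b)
  have hmain := key_list hq7 (φ x) (φ y) (fun i => φ (z i)) hqE l hnd hall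
  have hcomp : (fun σ : Equiv.Perm (Fin 5) =>
      M (φ x) (φ y) (φ (z (σ 0))) (φ (z (σ 1))) (φ (z (σ 2))) (φ (z (σ 3))) (φ (z (σ 4))))
      = φ ∘ (fun σ : Equiv.Perm (Fin 5) =>
        gc (gc (gc (gc (gc (gc x (z (σ 0))) y) (z (σ 1))) (z (σ 2))) (z (σ 3))) (z (σ 4))) := by
    funext σ
    simp only [Function.comp, map_gc]
    rfl
  rw [hcomp] at hmain
  rw [← List.map_map, ← map_list_prod φ] at hmain
  exact hmain
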